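/- For all t ≥ 0, ‖e^{tC}‖_∞ = e^{−rt} + (1 − e^{−rt})·2S/h. -/

import Mathlib

/-- The maximum norm of a real matrix: `‖X‖_∞ = max_i Σ_j |X i j|`. -/
noncomputable def matMaxNorm {ι κ : Type*} [Fintype ι] [Fintype κ]
    (X : Matrix ι κ ℝ) : ℝ :=
  ⨆ i, ∑ j, |X i j|

/-- The `2×2` matrix both of whose rows equal `(−rS/h, r·s_{m+1}/h)`. -/
noncomputable def Cmat (r spen S h : ℝ) : Matrix (Fin 2) (Fin 2) ℝ :=
  Matrix.of fun _ j => if j = 0 then -(r * S) / h else r * spen / h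

set_option maxHeartbeats 1000000 in
/-- For all `t ≥ 0`, `‖e^{tC}‖_∞ = e^{−rt} + (1 − e^{−rt})·2S/h`. -/
theorem statement3 (r spen S : ℝ) (hr : 0 < r) (hspen : 0 < spen) (hsS : spen < S)
    (C : Matrix (Fin 2) (Fin 2) ℝ) (hC : C = Cmat r spen S (S - spen)) :
    ∀ t : ℝ, 0 ≤ t →
      matMaxNorm (NormedSpace.exp (t • C)) =
        Real.exp (-(r * t)) + (1 - Real.exp (-(r * t))) * (2 * S / (S - spen)) := by
  intro t ht
  set h : ℝ := S - spen with hh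
  have hhpos : 0 < h := by rw [hh]; linarith
  have hhne : h ≠ 0 := hhpos.ne'
  set U : Matrix (Fin 2) (Fin 2) ℝ := !![1, spen; 1, S] with hU
  set V : Matrix (Fin 2) (Fin 2) ℝ := !![S / h, -spen / h; -1 / h, 1 / h] with hV
  have hUV : U * V = 1 := by
    rw [hU, hV]
    ext i j
    fin_cases i <;> fin_cases j <;>
      · simp [Matrix.mul_fin_two]
        field_simp
        try ring
        try exact Or.inl trivial
  have hUinv : U⁻¹ = V := Matrix.inv_eq_right_inv hUV
  have hUunit : IsUnit U :=
    (Matrix.isUnit_iff_isUnit_det U).mpr (Matrix.isUnit_det_of_right_inverse hUV)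
  set D : Matrix (Fin 2) (Fin 2) ℝ := Matrix.diagonal ![-(r * t), 0] with hD
  have hDmat : D = !![-(r * t), 0; 0, 0] := by
    rw [hD]; ext i j; fin_cases i <;> fin_cases j <;> simp
  have hdecomp : t • C = U * D * U⁻¹ := by
    rw [hUinv, hC, hU, hV, hDmat]
    ext i j
    fin_cases i <;> fin_cases j <;>
      · simp [Matrix.mul_fin_two, Cmat, Matrix.smul_apply]
        field_simp
        try ring
        try exact Or.inl trivial
  set E : ℝ := Real.exp (-(r * t)) with hE
  have hexpD : NormedSpace.exp D = Matrix.diagonal ![E, 1] := by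
    rw [hD, Matrix.exp_diagonal, Pi.exp_def]
    ext i j
    fin_cases i <;> fin_cases j <;>
      simp [hE, ← Real.exp_eq_exp_ℝ, Matrix.diagonal]
  have hexp : NormedSpace.exp (t • C) = U * Matrix.diagonal ![E, 1] * V := by
    rw [hdecomp, Matrix.exp_conj U D hUunit, hexpD, hUinv]
  have hEpos : 0 < E := Real.exp_pos _
  have hE1 : E ≤ 1 := by
    rw [hE]
    apply Real.exp_le_one_iff.mpr
    nlinarith
  have hM : NormedSpace.exp (t • C) =
      !![(E * S - spen) / h, spen * (1 - E) / h;
         S * (E - 1) / h, (S - E * spen) / h] := by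
    rw [hexp, hU, hV]
    have hd : Matrix.diagonal ![E, (1:ℝ)] = !![E, 0; 0, 1] := by
      ext i j; fin_cases i <;> fin_cases j <;> simp
    rw [hd]
    ext i j
    fin_cases i <;> fin_cases j <;>
      · simp [Matrix.mul_fin_two]
        field_simp
        try ring
  rw [hM]
  -- abs of the entries
  have habs1 : |spen * (1 - E) / h| = spen * (1 - E) / h :=
    abs_of_nonneg (div_nonneg (mul_nonneg hspen.le (by linarith)) hhpos.le)
  have habs2 : |S * (E - 1) / h| = S * (1 - E) / h := by
    rw [abs_of_nonpos (div_nonpos_of_nonpos_of_nonneg (by nlinarith) hhpos.le)]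
    ring
  have habs3 : |(S - E * spen) / h| = (S - E * spen) / h :=
    abs_of_nonneg (div_nonneg (by nlinarith) hhpos.le)
  set f : Fin 2 → ℝ := fun i => ∑ j, |(!![(E * S - spen) / h, spen * (1 - E) / h;
         S * (E - 1) / h, (S - E * spen) / h] : Matrix (Fin 2) (Fin 2) ℝ) i j| with hf
  have hf0 : f 0 = |(E * S - spen) / h| + spen * (1 - E) / h := by
    rw [hf]
    simp only [Fin.sum_univ_two, Matrix.cons_val', Matrix.cons_val_zero, Matrix.empty_val',
      Matrix.cons_val_fin_one, Matrix.cons_val_one, Matrix.head_cons, Matrix.head_fin_const,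
      Matrix.of_apply]
    rw [habs1]
  have hf1 : f 1 = S * (1 - E) / h + (S - E * spen) / h := by
    rw [hf]
    simp only [Fin.sum_univ_two, Matrix.cons_val', Matrix.cons_val_zero, Matrix.empty_val',
      Matrix.cons_val_fin_one, Matrix.cons_val_one, Matrix.head_cons, Matrix.head_fin_const,
      Matrix.of_apply]
    rw [habs2, habs3]
  have hf1' : f 1 = E + (1 - E) * (2 * S / h) := by
    rw [hf1]
    rw [hh]
    field_simp [sub_ne_zero.mpr hsS.ne']
    ring
  have hf0le : f 0 ≤ f 1 := by
    rw [hf0, hf1]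
    have hS : (0:ℝ) < S := hspen.trans hsS
    rcases abs_cases ((E * S - spen) / h) with ⟨he, _⟩ | ⟨he, _⟩ <;> rw [he]
    · rw [← add_div, ← add_div, div_le_div_iff₀ hhpos hhpos]
      nlinarith [mul_nonneg (mul_nonneg (sub_nonneg.2 hE1) hS.le) hhpos.le]
    · rw [← neg_div, ← add_div, ← add_div, div_le_div_iff₀ hhpos hhpos]
      nlinarith [mul_nonneg (show (0:ℝ) ≤ S - spen by linarith) hhpos.le]
  have hkey : matMaxNorm (!![(E * S - spen) / h, spen * (1 - E) / h;
         S * (E - 1) / h, (S - E * spen) / h] : Matrix (Fin 2) (Fin 2) ℝ) = f 1 := by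
    unfold matMaxNorm
    apply le_antisymm
    · apply ciSup_le
      intro i
      fin_cases i
      · exact hf0le
      · exact le_refl _
    · exact le_ciSup (Set.Finite.bddAbove (Set.finite_range f)) 1
  rw [hkey, hf1', hh]
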